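/- arXiv:2410.09716 — 2 statements merged into one kernel-verified Lean document; each statement's English description precedes it below -/
import Mathlib

section
/- Every measurable set E ⊆ ℝ of positive Lebesgue measure contains a three-point quadratic configuration: there exist x, t ∈ ℝ with t ≠ 0 such that x ∈ E, x + t ∈ E, and x + t² ∈ E. -/
open MeasureTheory Metric Filter ENNReal

theorem stmt1 (E : Set ℝ) (hE : MeasurableSet E) (hEpos : 0 < volume E) :
    ∃ x t : ℝ, t ≠ 0 ∧ x ∈ E ∧ x + t ∈ E ∧ x + t ^ 2 ∈ E := by
  -- a density point
  have hne : (ae (volume.restrict E)).NeBot :=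
    ae_neBot.mpr (by simpa [Measure.restrict_eq_zero] using hEpos.ne')
  obtain ⟨x₀, hx₀⟩ := (Besicovitch.ae_tendsto_measure_inter_div volume E).exists
  -- pick a small radius with high density
  have h67 : (6/7 : ℝ≥0∞) < 1 := by
    rw [ENNReal.div_lt_iff (by norm_num) (by norm_num)]; norm_num
  have hev : ∀ᶠ r in nhdsWithin (0:ℝ) (Set.Ioi 0),
      (6/7 : ℝ≥0∞) < volume (E ∩ closedBall x₀ r) / volume (closedBall x₀ r) ∧
      r ∈ Set.Ioo (0:ℝ) 1 := by
    refine (hx₀.eventually (eventually_gt_nhds h67)).and ?_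
    exact Ioo_mem_nhdsGT_of_mem (by norm_num : (0:ℝ) ∈ Set.Ico 0 1)
  obtain ⟨r, hr, hr01⟩ := hev.exists
  obtain ⟨hr0, hr1⟩ := hr01
  set K := closedBall x₀ r with hK
  set t := r / 2 with ht
  have ht0 : 0 < t := by positivity
  have ht1 : t < 1 := by rw [ht]; linarith
  have htsq : t ^ 2 ≤ t := by nlinarith
  have hbK : volume K = ENNReal.ofReal (2 * r) := by
    rw [hK, Real.volume_closedBall]
  have hbne : volume K ≠ 0 := by
    rw [hbK]; simp [ENNReal.ofReal_pos]; linarith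
  have hbtop : volume K ≠ ⊤ := by rw [hbK]; exact ENNReal.ofReal_ne_top
  -- from density : volume (K \ E) ≤ ofReal (2r/7)
  have hEK : volume (E ∩ K) ≤ volume K := measure_mono Set.inter_subset_right
  have hEKtop : volume (E ∩ K) ≠ ⊤ := (lt_of_le_of_lt hEK hbtop.lt_top).ne
  have hgt : (6/7 : ℝ≥0∞) * volume K < volume (E ∩ K) := by
    rw [← ENNReal.lt_div_iff_mul_lt (Or.inl hbne) (Or.inl hbtop)]
    exact hr
  have hdiff : volume (K \ E) ≤ ENNReal.ofReal (2 * r / 7) := by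
    have h1 : K \ E = K \ (E ∩ K) := by
      rw [Set.diff_inter_self_eq_diff]
    have h2 : volume (K \ (E ∩ K)) = volume K - volume (E ∩ K) :=
      measure_diff Set.inter_subset_right (hE.inter measurableSet_closedBall).nullMeasurableSet
        hEKtop
    rw [h1, h2]
    have h3 : volume K - volume (E ∩ K) ≤ volume K - 6/7 * volume K :=
      tsub_le_tsub_left hgt.le _
    refine h3.trans (le_of_eq ?_)
    rw [hbK]
    have h4 : (6/7 : ℝ≥0∞) = ENNReal.ofReal (6/7) := by
      rw [ENNReal.ofReal_div_of_pos (by norm_num)]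
      norm_num
    rw [h4, ← ENNReal.ofReal_mul (by norm_num), ← ENNReal.ofReal_sub _ (by positivity)]
    norm_num
    ring_nf
  -- covering argument on I = closedBall x₀ (r/2)
  set I := closedBall x₀ (r/2) with hI
  by_contra hcon
  push_neg at hcon
  have hsub : I ⊆ ((· + (0:ℝ)) ⁻¹' (K \ E)) ∪ ((· + t) ⁻¹' (K \ E)) ∪
      ((· + t ^ 2) ⁻¹' (K \ E)) := by
    intro x hx
    have hxI : |x - x₀| ≤ r / 2 := by
      rw [hI, closedBall, Set.mem_setOf_eq, Real.dist_eq] at hx; exact hx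
    have hmem : ∀ c : ℝ, 0 ≤ c → c ≤ r / 2 → x + c ∈ K := by
      intro c hc hc'
      rw [hK, closedBall, Set.mem_setOf_eq, Real.dist_eq]
      rw [abs_le] at hxI ⊢
      constructor <;> linarith [hxI.1, hxI.2]
    by_cases h1 : x ∈ E
    · by_cases h2 : x + t ∈ E
      · have h3 : x + t ^ 2 ∉ E := by
          intro h3
          exact hcon x t ht0.ne' h1 h2 h3
        exact Or.inr ⟨hmem _ (by positivity) (htsq.trans le_rfl), h3⟩
      · exact Or.inl (Or.inr ⟨hmem t ht0.le le_rfl, h2⟩)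
    · exact Or.inl (Or.inl ⟨by simpa using hmem 0 le_rfl (by linarith), by simpa using h1⟩)
  have hvolI : volume I = ENNReal.ofReal r := by
    rw [hI, Real.volume_closedBall]; ring_nf
  have hpre : ∀ c : ℝ, volume ((· + c) ⁻¹' (K \ E)) = volume (K \ E) := fun c =>
    measure_preimage_add_right volume c (K \ E)
  have hbound : volume I ≤ 3 * ENNReal.ofReal (2 * r / 7) := by
    calc volume I ≤ volume (((· + (0:ℝ)) ⁻¹' (K \ E)) ∪ ((· + t) ⁻¹' (K \ E)) ∪
        ((· + t ^ 2) ⁻¹' (K \ E))) := measure_mono hsub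
      _ ≤ volume ((· + (0:ℝ)) ⁻¹' (K \ E)) + volume ((· + t) ⁻¹' (K \ E)) +
          volume ((· + t ^ 2) ⁻¹' (K \ E)) :=
        le_trans (measure_union_le _ _) (by gcongr; exact measure_union_le _ _)
      _ = 3 * volume (K \ E) := by rw [hpre, hpre, hpre]; ring
      _ ≤ 3 * ENNReal.ofReal (2 * r / 7) := by gcongr
  rw [hvolI] at hbound
  have : (3 : ℝ≥0∞) * ENNReal.ofReal (2 * r / 7) = ENNReal.ofReal (6 * r / 7) := by
    rw [show (3:ℝ≥0∞) = ENNReal.ofReal 3 by norm_num, ← ENNReal.ofReal_mul (by norm_num)]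
    ring_nf
  rw [this] at hbound
  rw [ENNReal.ofReal_le_ofReal_iff (by positivity)] at hbound
  linarith
end

section
/- Let μ be a probability measure on ℝ satisfying the spectral gap condition ∫_{A^{1/5} ≤ |ξ| ≤ B²} |μ̂(ξ)| dξ ≤ A^{-3} with 1 ≤ A ≤ B, and let φ be a Schwartz mollifier with ∫φ = 1 and φ̂'(0) = 0. Then for A sufficiently large, ∫_ℝ |μ̂(ξ)| · |φ̂(B^{-1}ξ) − φ̂(A^{-1}ξ)| dξ ≤ C·A^{-7/5} for a constant C depending only on φ. -/
open MeasureTheory Set ENNReal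

noncomputable def measureFT (μ : MeasureTheory.Measure ℝ) (ξ : ℝ) : ℂ :=
  ∫ x, Complex.exp (-2 * Real.pi * x * ξ * Complex.I) ∂μ

/-- The complexification of a real-valued Schwartz function. -/
noncomputable def ofRealSchwartz (φ : SchwartzMap ℝ ℝ) : SchwartzMap ℝ ℂ where
  toFun x := (φ x : ℂ)
  smooth' := Complex.ofRealCLM.contDiff.comp (φ.smooth ⊤)
  decay' := by
    intro k n
    obtain ⟨C, hC⟩ := φ.decay' k n
    refine ⟨C, fun x => ?_⟩
    have h : (fun x => ((φ x : ℂ))) = Complex.ofRealLI ∘ φ := rfl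
    rw [h, Complex.ofRealLI.norm_iteratedFDeriv_comp_left (φ.smooth ⊤).contDiffAt (mod_cast le_top)]
    exact hC x

lemma aux_lintegral_sq (R c : ℝ) (hR : 0 < R) (hc : 0 ≤ c) :
    ∫⁻ ξ in {ξ : ℝ | |ξ| ≤ R}, ENNReal.ofReal (c * ξ^2) =
      ENNReal.ofReal (c * (2/3 * R^3)) := by
  have hset : {ξ : ℝ | |ξ| ≤ R} = Icc (-R) R := by ext x; simp [abs_le]
  rw [hset, ← ofReal_integral_eq_lintegral_ofReal]
  · congr 1
    rw [integral_Icc_eq_integral_Ioc, ← intervalIntegral.integral_of_le (by linarith : -R ≤ R),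
      intervalIntegral.integral_const_mul, integral_pow]
    ring
  · exact ((continuous_const.mul (continuous_pow 2)).integrableOn_Icc)
  · exact ae_of_all _ fun x => mul_nonneg hc (sq_nonneg x)

lemma aux_lintegral_rpow (R c : ℝ) (hR : 0 < R) (hc : 0 ≤ c) :
    ∫⁻ ξ in {ξ : ℝ | R ≤ |ξ|}, ENNReal.ofReal (c * |ξ| ^ (-5 : ℝ)) ≤
      ENNReal.ofReal (c * (R ^ (-4 : ℝ) / 2)) := by
  have hIci : ∫⁻ ξ in Ici R, ENNReal.ofReal (c * |ξ| ^ (-5 : ℝ)) =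
      ENNReal.ofReal (c * (R ^ (-4 : ℝ) / 4)) := by
    rw [show (volume : Measure ℝ).restrict (Ici R) = volume.restrict (Ioi R) from
      (Measure.restrict_congr_set Ioi_ae_eq_Ici).symm]
    rw [setLIntegral_congr_fun_ae measurableSet_Ioi (ae_of_all _ fun x (hx : R < x) => by
      rw [abs_of_pos (hR.trans hx)])]
    rw [← ofReal_integral_eq_lintegral_ofReal]
    · rw [integral_const_mul, integral_Ioi_rpow_of_lt (by norm_num) hR]
      norm_num
    · exact (integrableOn_Ioi_rpow_of_lt (by norm_num) hR).const_mul c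
    · exact (ae_restrict_iff' measurableSet_Ioi).2 (ae_of_all _ fun x hx =>
        mul_nonneg hc (Real.rpow_nonneg (le_of_lt (hR.trans hx)) _))
  have hIic : ∫⁻ ξ in Iic (-R), ENNReal.ofReal (c * |ξ| ^ (-5 : ℝ)) =
      ∫⁻ ξ in Ici R, ENNReal.ofReal (c * |ξ| ^ (-5 : ℝ)) := by
    have hpre : (Neg.neg ⁻¹' (Ici R) : Set ℝ) = Iic (-R) := by
      ext x; simp [le_neg]
    have := (Measure.measurePreserving_neg (volume : Measure ℝ)).setLIntegral_comp_preimage_emb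
      (MeasurableEquiv.neg ℝ).measurableEmbedding
      (f := fun y => ENNReal.ofReal (c * |y| ^ (-5 : ℝ))) (s := Ici R)
    rw [hpre] at this
    simpa [abs_neg] using this
  have hsub : {ξ : ℝ | R ≤ |ξ|} ⊆ Iic (-R) ∪ Ici R := by
    intro x hx
    rcases le_or_gt x 0 with h | h
    · left; simp only [mem_Iic]; have := hx; rw [mem_setOf_eq, abs_of_nonpos h] at this; linarith
    · right; simp only [mem_Ici]; have := hx; rw [mem_setOf_eq, abs_of_pos h] at this; linarith
  calc ∫⁻ ξ in {ξ : ℝ | R ≤ |ξ|}, ENNReal.ofReal (c * |ξ| ^ (-5 : ℝ))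
      ≤ ∫⁻ ξ in Iic (-R) ∪ Ici R, ENNReal.ofReal (c * |ξ| ^ (-5 : ℝ)) :=
        lintegral_mono_set hsub
    _ ≤ (∫⁻ ξ in Iic (-R), ENNReal.ofReal (c * |ξ| ^ (-5 : ℝ))) +
        ∫⁻ ξ in Ici R, ENNReal.ofReal (c * |ξ| ^ (-5 : ℝ)) := lintegral_union_le _ _ _
    _ = ENNReal.ofReal (c * (R ^ (-4 : ℝ) / 4)) + ENNReal.ofReal (c * (R ^ (-4 : ℝ) / 4)) := by
        rw [hIic, hIci]
    _ = ENNReal.ofReal (c * (R ^ (-4 : ℝ) / 2)) := by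
        rw [← ENNReal.ofReal_add (by positivity) (by positivity)]
        congr 1; ring

lemma aux_norm_measureFT (μ : Measure ℝ) [IsProbabilityMeasure μ] (ξ : ℝ) :
    ‖measureFT μ ξ‖ ≤ 1 := by
  have h : ‖measureFT μ ξ‖ ≤ 1 * (μ univ).toReal := by
    refine norm_integral_le_of_norm_le_const (ae_of_all _ fun x => ?_)
    rw [Complex.norm_exp]
    have : (-2 * ↑Real.pi * (x:ℂ) * (ξ:ℂ) * Complex.I).re = 0 := by simp
    rw [this, Real.exp_zero]
  simpa using h

lemma aux_quad (ψ : SchwartzMap ℝ ℂ) (M : ℝ) (hM : ∀ x, ‖iteratedFDeriv ℝ 2 (⇑ψ) x‖ ≤ M)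
    (h0 : deriv (⇑ψ) 0 = 0) (h1 : ψ 0 = 1) : ∀ η : ℝ, ‖ψ η - 1‖ ≤ M * η^2 := by
  have hsm : ContDiff ℝ (↑(⊤:ℕ∞)) ⇑ψ := ψ.smooth ⊤
  have hMnn : 0 ≤ M := le_trans (norm_nonneg _) (hM 0)
  have hd2 : ∀ x, ‖deriv (deriv (⇑ψ)) x‖ ≤ M := by
    intro x
    have h := norm_iteratedFDeriv_eq_norm_iteratedDeriv (𝕜 := ℝ) (f := ⇑ψ) (n := 2) (x := x)
    rw [iteratedDeriv_succ, iteratedDeriv_one] at h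
    rw [← h]; exact hM x
  have h' : ContDiff ℝ (↑(⊤:ℕ∞)) (deriv (⇑ψ)) := (contDiff_infty_iff_deriv.mp hsm).2
  have hlip : ∀ t : ℝ, ‖deriv (⇑ψ) t‖ ≤ M * |t| := by
    intro t
    have := convex_univ.norm_image_sub_le_of_norm_deriv_le (f := deriv (⇑ψ))
      (fun x _ => (h'.differentiable (by simp)) x) (fun x _ => hd2 x)
      (mem_univ 0) (mem_univ t)
    simpa [h0, Real.norm_eq_abs] using this
  intro η
  have hb : ∀ x ∈ uIcc (0:ℝ) η, ‖deriv (⇑ψ) x‖ ≤ M * |η| := by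
    intro x hx
    refine (hlip x).trans (mul_le_mul_of_nonneg_left ?_ hMnn)
    rcases mem_uIcc.mp hx with ⟨ha, hb⟩ | ⟨ha, hb⟩
    · rw [_root_.abs_of_nonneg ha]; exact hb.trans (le_abs_self η)
    · rw [_root_.abs_of_nonpos hb]; exact (neg_le_neg ha).trans (neg_le_abs η)
  have := (convex_uIcc (0:ℝ) η).norm_image_sub_le_of_norm_deriv_le
    (fun x _ => (hsm.differentiable (by simp)) x) hb (left_mem_uIcc) (right_mem_uIcc)
  rw [h1] at this
  calc ‖ψ η - 1‖ ≤ M * |η| * ‖η - 0‖ := this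
    _ = M * η ^ 2 := by
        rw [sub_zero, Real.norm_eq_abs, mul_assoc, abs_mul_abs_self, sq]

theorem stmt13 (φ : SchwartzMap ℝ ℝ) (hint : ∫ x, φ x = 1)
    (hderiv : deriv (FourierTransform.fourier (fun x => (φ x : ℂ))) 0 = 0) :
    ∃ C : ℝ, 0 < C ∧ ∃ A₀ : ℝ, ∀ (μ : Measure ℝ), IsProbabilityMeasure μ →
      ∀ A B : ℝ, A₀ ≤ A → 1 ≤ A → A ≤ B →
      (∫⁻ ξ in {ξ : ℝ | A ^ ((1 : ℝ) / 5) ≤ |ξ| ∧ |ξ| ≤ B ^ 2},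
          (‖measureFT μ ξ‖₊ : ℝ≥0∞)) ≤ ENNReal.ofReal (A ^ (-3 : ℝ)) →
      ∫⁻ ξ : ℝ, (‖measureFT μ ξ‖₊ : ℝ≥0∞) *
          (‖FourierTransform.fourier (fun x => (φ x : ℂ)) (B⁻¹ * ξ) -
            FourierTransform.fourier (fun x => (φ x : ℂ)) (A⁻¹ * ξ)‖₊ : ℝ≥0∞) ≤
        ENNReal.ofReal (C * A ^ (-(7 : ℝ) / 5)) := by
  set ψ : SchwartzMap ℝ ℂ := SchwartzMap.fourierTransformCLM ℝ (ofRealSchwartz φ) with hψdef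
  have hψ : ⇑ψ = FourierTransform.fourier (fun x => (φ x : ℂ)) := rfl
  obtain ⟨S, hS'⟩ := ψ.decay' 0 0
  obtain ⟨D, hD'⟩ := ψ.decay' 5 0
  obtain ⟨M, hM'⟩ := ψ.decay' 0 2
  have hS : ∀ x, ‖ψ x‖ ≤ S := fun x => by have h := hS' x; simp at h; exact h
  have hD : ∀ x : ℝ, |x|^5 * ‖ψ x‖ ≤ D := fun x => by
    have h := hD' x; simp [Real.norm_eq_abs] at h; exact h
  have hM : ∀ x, ‖iteratedFDeriv ℝ 2 (⇑ψ) x‖ ≤ M := fun x => by have h := hM' x; simp at h; exact h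
  have hS0 : 0 ≤ S := le_trans (norm_nonneg _) (hS 0)
  have hM0 : 0 ≤ M := le_trans (norm_nonneg _) (hM 0)
  have hD0 : 0 ≤ D := le_trans (by positivity) (hD 1)
  -- ψ 0 = 1
  have hψ0 : ψ 0 = 1 := by
    have h1 : ψ 0 = ∫ x, (φ x : ℂ) := by
      rw [hψ, Real.fourier_real_eq]
      simp
    have h2 : ∫ x, ((φ x : ℝ) : ℂ) = ((∫ x, φ x : ℝ) : ℂ) := integral_ofReal (𝕜 := ℂ)
    rw [h1, h2, hint, Complex.ofReal_one]
  have hd0 : deriv (⇑ψ) 0 = 0 := by rw [hψ]; exact hderiv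
  have hquad := aux_quad ψ M hM hd0 hψ0
  refine ⟨4*M/3 + 2*S + D + 1, by linarith, 1, ?_⟩
  intro μ hprob A B hA₀ hA1 hAB hgap
  haveI := hprob
  have hA0 : (0:ℝ) < A := lt_of_lt_of_le one_pos hA1
  have hB1 : (1:ℝ) ≤ B := hA1.trans hAB
  have hB0 : (0:ℝ) < B := lt_of_lt_of_le one_pos hB1
  set R1 : ℝ := A ^ ((1 : ℝ) / 5) with hR1def
  have hR1pos : 0 < R1 := Real.rpow_pos_of_pos hA0 _
  have hB2pos : (0:ℝ) < B ^ 2 := by positivity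
  set p : ℝ := A ^ (-(7 : ℝ) / 5) with hpdef
  have hppos : 0 < p := Real.rpow_pos_of_pos hA0 _
  -- pointwise bound on the measure Fourier transform
  have hnorm1 : ∀ ξ : ℝ, (‖measureFT μ ξ‖₊ : ℝ≥0∞) ≤ 1 := by
    intro ξ
    rw [← ENNReal.coe_one, ENNReal.coe_le_coe]
    exact_mod_cast aux_norm_measureFT μ ξ
  -- pointwise region-1 bound
  have hreg1 : ∀ ξ : ℝ, ‖ψ (B⁻¹*ξ) - ψ (A⁻¹*ξ)‖ ≤ (2*M/A^2) * ξ^2 := by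
    intro ξ
    have h1 : ‖ψ (B⁻¹*ξ) - ψ (A⁻¹*ξ)‖ ≤ ‖ψ (B⁻¹*ξ) - 1‖ + ‖ψ (A⁻¹*ξ) - 1‖ := by
      have := norm_sub_le_norm_sub_add_norm_sub (ψ (B⁻¹*ξ)) 1 (ψ (A⁻¹*ξ))
      rwa [norm_sub_rev 1 (ψ (A⁻¹*ξ))] at this
    have h2 := hquad (B⁻¹*ξ)
    have h3 := hquad (A⁻¹*ξ)
    have hinv : (B⁻¹*ξ)^2 ≤ (A⁻¹*ξ)^2 := by
      rw [mul_pow, mul_pow]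
      have : B⁻¹ ^ 2 ≤ A⁻¹ ^ 2 := by
        apply pow_le_pow_left₀ (by positivity)
        exact inv_anti₀ hA0 hAB
      exact mul_le_mul_of_nonneg_right this (sq_nonneg ξ)
    have h4 : (A⁻¹*ξ)^2 = ξ^2 / A^2 := by field_simp
    calc ‖ψ (B⁻¹*ξ) - ψ (A⁻¹*ξ)‖ ≤ M * (B⁻¹*ξ)^2 + M * (A⁻¹*ξ)^2 :=
          h1.trans (add_le_add h2 h3)
      _ ≤ M * (A⁻¹*ξ)^2 + M * (A⁻¹*ξ)^2 := by
          exact add_le_add_left (mul_le_mul_of_nonneg_left hinv hM0) _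
      _ = (2*M/A^2) * ξ^2 := by rw [h4]; ring
  -- pointwise region-3 bound
  have hreg3 : ∀ ξ : ℝ, B^2 ≤ |ξ| →
      ‖ψ (B⁻¹*ξ) - ψ (A⁻¹*ξ)‖ ≤ (2*D*B^5) * |ξ| ^ (-5:ℝ) := by
    intro ξ hξ
    have hξpos : 0 < |ξ| := lt_of_lt_of_le hB2pos hξ
    have hb : ∀ t : ℝ, 0 < t → t ≤ B → |ξ|^5 * ‖ψ (t⁻¹*ξ)‖ ≤ D * B^5 := by
      intro t ht htB
      have h := hD (t⁻¹*ξ)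
      have habs : |t⁻¹*ξ| = |ξ| / t := by
        rw [abs_mul, abs_inv, abs_of_pos ht]; ring
      have ht5 : (0:ℝ) < t^5 := by positivity
      have h2 : |ξ|^5 * ‖ψ (t⁻¹*ξ)‖ ≤ D * t^5 := by
        have := mul_le_mul_of_nonneg_left h (le_of_lt ht5)
        calc |ξ|^5 * ‖ψ (t⁻¹*ξ)‖ = t^5 * (|t⁻¹*ξ|^5 * ‖ψ (t⁻¹*ξ)‖) := by
              rw [habs, div_pow]; field_simp
          _ ≤ t^5 * D := this
          _ = D * t^5 := by ring
      exact h2.trans (mul_le_mul_of_nonneg_left (pow_le_pow_left₀ ht.le htB 5) hD0)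
    have hsum : |ξ|^5 * ‖ψ (B⁻¹*ξ) - ψ (A⁻¹*ξ)‖ ≤ 2*D*B^5 := by
      have h1 := hb B hB0 le_rfl
      have h2 := hb A hA0 hAB
      have h3 : ‖ψ (B⁻¹*ξ) - ψ (A⁻¹*ξ)‖ ≤ ‖ψ (B⁻¹*ξ)‖ + ‖ψ (A⁻¹*ξ)‖ := norm_sub_le _ _
      nlinarith [pow_pos hξpos 5]
    have h5 : |ξ| ^ (-5:ℝ) = (|ξ|^5)⁻¹ := by
      rw [show (-5:ℝ) = -(5:ℕ) by norm_num, Real.rpow_neg (abs_nonneg ξ),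
        Real.rpow_natCast]
    rw [h5, ← div_eq_mul_inv, le_div_iff₀ (by positivity)]
    linarith [hsum]
  -- the three sets
  set s1 : Set ℝ := {ξ : ℝ | |ξ| ≤ R1} with hs1def
  set s2 : Set ℝ := {ξ : ℝ | R1 ≤ |ξ| ∧ |ξ| ≤ B ^ 2} with hs2def
  set s3 : Set ℝ := {ξ : ℝ | B ^ 2 ≤ |ξ|} with hs3def
  have hms1 : MeasurableSet s1 := measurableSet_le continuous_abs.measurable measurable_const
  have hms2 : MeasurableSet s2 := by
    rw [hs2def, setOf_and]
    exact (measurableSet_le measurable_const continuous_abs.measurable).inter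
      (measurableSet_le continuous_abs.measurable measurable_const)
  have hms3 : MeasurableSet s3 := measurableSet_le measurable_const continuous_abs.measurable
  set F : ℝ → ℝ≥0∞ := fun ξ => (‖measureFT μ ξ‖₊ : ℝ≥0∞) *
      (‖ψ (B⁻¹ * ξ) - ψ (A⁻¹ * ξ)‖₊ : ℝ≥0∞) with hFdef
  have hcover : (univ : Set ℝ) ⊆ s1 ∪ (s2 ∪ s3) := by
    intro ξ _
    rcases le_total (|ξ|) R1 with h | h
    · exact Or.inl h
    · rcases le_total (|ξ|) (B^2) with h' | h'
      · exact Or.inr (Or.inl ⟨h, h'⟩)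
      · exact Or.inr (Or.inr h')
  -- region 1 estimate
  have hest1 : ∫⁻ ξ in s1, F ξ ≤ ENNReal.ofReal ((4*M/3) * p) := by
    have hpt : ∀ ξ ∈ s1, F ξ ≤ ENNReal.ofReal ((2*M/A^2) * ξ^2) := by
      intro ξ _
      calc F ξ ≤ 1 * (‖ψ (B⁻¹ * ξ) - ψ (A⁻¹ * ξ)‖₊ : ℝ≥0∞) :=
            mul_le_mul_left (hnorm1 ξ) _
        _ = ENNReal.ofReal ‖ψ (B⁻¹ * ξ) - ψ (A⁻¹ * ξ)‖ := by
            rw [one_mul, ofReal_norm, enorm_eq_nnnorm]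
        _ ≤ ENNReal.ofReal ((2*M/A^2) * ξ^2) := ENNReal.ofReal_le_ofReal (hreg1 ξ)
    calc ∫⁻ ξ in s1, F ξ ≤ ∫⁻ ξ in s1, ENNReal.ofReal ((2*M/A^2) * ξ^2) :=
          setLIntegral_mono' hms1 hpt
      _ = ENNReal.ofReal ((2*M/A^2) * (2/3 * R1^3)) :=
          aux_lintegral_sq R1 (2*M/A^2) hR1pos (by positivity)
      _ = ENNReal.ofReal ((4*M/3) * p) := by
          congr 1
          have hR13 : R1^3 = A ^ ((3:ℝ)/5) := by
            rw [hR1def, ← Real.rpow_natCast (A ^ ((1:ℝ)/5)) 3, ← Real.rpow_mul hA0.le]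
            norm_num
          have hA2 : (A^2 : ℝ) = A ^ (2:ℝ) := by
            rw [← Real.rpow_natCast A 2]; norm_num
          have hp : A ^ ((3:ℝ)/5) / A ^ (2:ℝ) = p := by
            rw [hpdef, ← Real.rpow_sub hA0]; norm_num
          rw [hR13, hA2, ← hp]
          field_simp
          ring
  -- region 2 estimate
  have hest2 : ∫⁻ ξ in s2, F ξ ≤ ENNReal.ofReal ((2*S) * p) := by
    have hpt : ∀ ξ ∈ s2, F ξ ≤ ENNReal.ofReal (2*S) * (‖measureFT μ ξ‖₊ : ℝ≥0∞) := by
      intro ξ _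
      rw [mul_comm (ENNReal.ofReal (2*S))]
      refine mul_le_mul_right ?_ _
      rw [← enorm_eq_nnnorm, ← ofReal_norm]
      refine ENNReal.ofReal_le_ofReal ?_
      calc ‖ψ (B⁻¹ * ξ) - ψ (A⁻¹ * ξ)‖ ≤ ‖ψ (B⁻¹ * ξ)‖ + ‖ψ (A⁻¹ * ξ)‖ := norm_sub_le _ _
        _ ≤ S + S := add_le_add (hS _) (hS _)
        _ = 2*S := by ring
    calc ∫⁻ ξ in s2, F ξ
        ≤ ∫⁻ ξ in s2, ENNReal.ofReal (2*S) * (‖measureFT μ ξ‖₊ : ℝ≥0∞) :=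
          setLIntegral_mono' hms2 hpt
      _ = ENNReal.ofReal (2*S) * ∫⁻ ξ in s2, (‖measureFT μ ξ‖₊ : ℝ≥0∞) :=
          lintegral_const_mul' _ _ ENNReal.ofReal_ne_top
      _ ≤ ENNReal.ofReal (2*S) * ENNReal.ofReal (A ^ (-3:ℝ)) := by
          exact mul_le_mul_right hgap _
      _ = ENNReal.ofReal ((2*S) * A ^ (-3:ℝ)) := by
          rw [← ENNReal.ofReal_mul (by linarith : (0:ℝ) ≤ 2*S)]
      _ ≤ ENNReal.ofReal ((2*S) * p) := by
          refine ENNReal.ofReal_le_ofReal ?_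
          refine mul_le_mul_of_nonneg_left ?_ (by linarith)
          rw [hpdef]
          exact Real.rpow_le_rpow_of_exponent_le hA1 (by norm_num)
  -- region 3 estimate
  have hest3 : ∫⁻ ξ in s3, F ξ ≤ ENNReal.ofReal (D * p) := by
    have hpt : ∀ ξ ∈ s3, F ξ ≤ ENNReal.ofReal ((2*D*B^5) * |ξ| ^ (-5:ℝ)) := by
      intro ξ hξ
      calc F ξ ≤ 1 * (‖ψ (B⁻¹ * ξ) - ψ (A⁻¹ * ξ)‖₊ : ℝ≥0∞) :=
            mul_le_mul_left (hnorm1 ξ) _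
        _ = ENNReal.ofReal ‖ψ (B⁻¹ * ξ) - ψ (A⁻¹ * ξ)‖ := by
            rw [one_mul, ofReal_norm, enorm_eq_nnnorm]
        _ ≤ ENNReal.ofReal ((2*D*B^5) * |ξ| ^ (-5:ℝ)) :=
            ENNReal.ofReal_le_ofReal (hreg3 ξ hξ)
    calc ∫⁻ ξ in s3, F ξ ≤ ∫⁻ ξ in s3, ENNReal.ofReal ((2*D*B^5) * |ξ| ^ (-5:ℝ)) :=
          setLIntegral_mono' hms3 hpt
      _ ≤ ENNReal.ofReal ((2*D*B^5) * ((B^2) ^ (-4:ℝ) / 2)) :=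
          aux_lintegral_rpow (B^2) (2*D*B^5) hB2pos (by positivity)
      _ ≤ ENNReal.ofReal (D * p) := by
          refine ENNReal.ofReal_le_ofReal ?_
          have h1 : ((B^2 : ℝ)) ^ (-4:ℝ) = B ^ (-8:ℝ) := by
            rw [← Real.rpow_natCast B 2, ← Real.rpow_mul hB0.le]; norm_num
          have h2 : (2*D*B^5) * ((B^2) ^ (-4:ℝ) / 2) = D * B ^ (-3:ℝ) := by
            rw [h1]
            have h3 : (B^5 : ℝ) = B ^ (5:ℝ) := by
              rw [← Real.rpow_natCast B 5]; norm_num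
            rw [h3, show (-3:ℝ) = 5 + -8 by norm_num, Real.rpow_add hB0]
            ring
          rw [h2]
          refine mul_le_mul_of_nonneg_left ?_ hD0
          calc B ^ (-3:ℝ) ≤ A ^ (-3:ℝ) := by
                rw [Real.rpow_neg hB0.le, Real.rpow_neg hA0.le]
                exact inv_anti₀ (Real.rpow_pos_of_pos hA0 _)
                  (Real.rpow_le_rpow hA0.le hAB (by norm_num))
            _ ≤ p := by
                rw [hpdef]
                exact Real.rpow_le_rpow_of_exponent_le hA1 (by norm_num)
  -- put everything together
  have hgoal : ∫⁻ ξ : ℝ, F ξ ≤ ENNReal.ofReal ((4*M/3 + 2*S + D + 1) * p) := by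
    calc ∫⁻ ξ : ℝ, F ξ = ∫⁻ ξ in (univ : Set ℝ), F ξ := by rw [setLIntegral_univ]
      _ ≤ ∫⁻ ξ in s1 ∪ (s2 ∪ s3), F ξ := lintegral_mono_set hcover
      _ ≤ (∫⁻ ξ in s1, F ξ) + ∫⁻ ξ in s2 ∪ s3, F ξ := lintegral_union_le _ _ _
      _ ≤ (∫⁻ ξ in s1, F ξ) + ((∫⁻ ξ in s2, F ξ) + ∫⁻ ξ in s3, F ξ) :=
          add_le_add_right (lintegral_union_le _ _ _) _
      _ ≤ ENNReal.ofReal ((4*M/3) * p) +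
          (ENNReal.ofReal ((2*S) * p) + ENNReal.ofReal (D * p)) :=
          add_le_add hest1 (add_le_add hest2 hest3)
      _ = ENNReal.ofReal ((4*M/3) * p + ((2*S) * p + D * p)) := by
          rw [← ENNReal.ofReal_add (by positivity) (by positivity),
            ← ENNReal.ofReal_add (by positivity) (by positivity)]
      _ ≤ ENNReal.ofReal ((4*M/3 + 2*S + D + 1) * p) := by
          refine ENNReal.ofReal_le_ofReal ?_
          nlinarith [hppos.le]
  exact hgoal
end
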